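/- Let Y be a real random variable with finite expectation, cumulative distribution function F(x) = P(Y ≤ x), and let τ ∈ (0, 1). If F is continuous at a point θ ∈ ℝ, then the function J(θ) = E[ρ_τ(Y − θ)], where ρ_τ is the pinball loss at level τ, is differentiable at θ with derivative J'(θ) = F(θ) − τ. -/

import Mathlib

open MeasureTheory Filter Topology

/-- The pinball (quantile regression) loss at level `τ`:
`ρ_τ(ε) = ε·(τ − 1_{ε < 0})`. -/
noncomputable def pinball (τ ε : ℝ) : ℝ := ε * (τ - if ε < 0 then 1 else 0)

lemma pinball_eq (τ ε : ℝ) : pinball τ ε = τ * ε + max (-ε) 0 := by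
  unfold pinball
  rcases lt_or_ge ε 0 with h | h
  · simp [h, max_eq_left (by linarith : (0:ℝ) ≤ -ε)]; ring
  · simp [not_lt.mpr h, max_eq_right (by linarith : -ε ≤ (0:ℝ))]; ring

/-- **Derivative of the expected pinball loss.**
For an integrable real random variable `Y` with CDF `F` and `τ ∈ (0,1)`,
if `F` is continuous at `θ`, then `J(θ) = E[ρ_τ(Y − θ)]` is differentiable
at `θ` with derivative `J'(θ) = F(θ) − τ`. -/
theorem expected_pinball_hasDerivAt
    {Ω : Type*} [MeasurableSpace Ω] (P : Measure Ω) [IsProbabilityMeasure P]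
    (Y : Ω → ℝ) (hY : Integrable Y P)
    (F : ℝ → ℝ) (hF : ∀ x, F x = (P {ω | Y ω ≤ x}).toReal)
    (τ : ℝ) (hτ : τ ∈ Set.Ioo (0 : ℝ) 1)
    (J : ℝ → ℝ) (hJ : ∀ θ, J θ = ∫ ω, pinball τ (Y ω - θ) ∂P)
    (θ : ℝ) (hcont : ContinuousAt F θ) :
    HasDerivAt J (F θ - τ) θ := by
  obtain ⟨hτ0, hτ1⟩ := hτ
  -- replace Y by a measurable representative
  set Y' : Ω → ℝ := hY.1.mk Y with hY'def
  have hY'meas : Measurable Y' := hY.1.measurable_mk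
  have hYY' : Y =ᵐ[P] Y' := hY.1.ae_eq_mk
  have hY'int : Integrable Y' P := hY.congr hYY'
  have hFeq : ∀ x, F x = (P {ω | Y' ω ≤ x}).toReal := by
    intro x
    rw [hF x]
    congr 1
    apply measure_congr
    filter_upwards [hYY'] with ω hω
    show (Y ω ≤ x) = (Y' ω ≤ x)
    rw [hω]
  -- P {Y' = θ} = 0
  have hset : ∀ n : ℕ, MeasurableSet {ω | Y' ω ∈ Set.Ioc (θ - 1/(n+1)) θ} :=
    fun n => hY'meas measurableSet_Ioc
  have hmIoc : ∀ n : ℕ, P {ω | Y' ω ∈ Set.Ioc (θ - 1/(n+1)) θ}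
      = P {ω | Y' ω ≤ θ} - P {ω | Y' ω ≤ θ - 1/(n+1)} := by
    intro n
    have hdiff : {ω | Y' ω ∈ Set.Ioc (θ - 1/(n+1)) θ}
        = {ω | Y' ω ≤ θ} \ {ω | Y' ω ≤ θ - 1/(n+1)} := by
      ext ω; simp [Set.mem_Ioc, and_comm, not_le]
    rw [hdiff, measure_diff]
    · intro ω hω
      simp only [Set.mem_setOf_eq] at *
      have : (0:ℝ) < 1/(n+1) := by positivity
      linarith
    · exact (hY'meas measurableSet_Iic).nullMeasurableSet
    · exact measure_ne_top P _
  have hnull : P {ω | Y' ω = θ} = 0 := by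
    have htendsto : Filter.Tendsto (fun n : ℕ => P {ω | Y' ω ∈ Set.Ioc (θ - 1/(n+1)) θ})
        Filter.atTop (𝓝 (P (⋂ n : ℕ, {ω | Y' ω ∈ Set.Ioc (θ - 1/(n+1)) θ}))) := by
      apply tendsto_measure_iInter_atTop (fun n => (hset n).nullMeasurableSet)
      · intro m n hmn ω hω
        simp only [Set.mem_setOf_eq, Set.mem_Ioc] at *
        refine ⟨lt_of_le_of_lt ?_ hω.1, hω.2⟩
        have : (1:ℝ)/(n+1) ≤ 1/(m+1) := by
          apply one_div_le_one_div_of_le (by positivity)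
          have : (m:ℝ) ≤ n := Nat.cast_le.mpr hmn
          linarith
        linarith
      · exact ⟨0, measure_ne_top P _⟩
    have hreal : Filter.Tendsto
        (fun n : ℕ => (P {ω | Y' ω ∈ Set.Ioc (θ - 1/(n+1)) θ}).toReal)
        Filter.atTop (𝓝 0) := by
      have h1 : ∀ n : ℕ, (P {ω | Y' ω ∈ Set.Ioc (θ - 1/(n+1)) θ}).toReal
          = F θ - F (θ - 1/(n+1)) := by
        intro n
        rw [hmIoc n, ENNReal.toReal_sub_of_le ?_ (measure_ne_top P _), hFeq, hFeq]
        apply measure_mono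
        intro ω hω
        simp only [Set.mem_setOf_eq] at *
        have : (0:ℝ) < 1/(n+1) := by positivity
        linarith
      simp only [h1]
      have h2 : Filter.Tendsto (fun n : ℕ => θ - 1/(n+1)) Filter.atTop (𝓝 θ) := by
        have := tendsto_one_div_add_atTop_nhds_zero_nat (𝕜 := ℝ)
        have := (tendsto_const_nhds (x := θ) (f := Filter.atTop (α := ℕ))).sub this
        simpa using this
      have h3 := (hcont.tendsto.comp h2)
      have := (tendsto_const_nhds (x := F θ) (f := Filter.atTop (α := ℕ))).sub h3
      simpa using this
    have hlim0 : Filter.Tendsto (fun n : ℕ => P {ω | Y' ω ∈ Set.Ioc (θ - 1/(n+1)) θ})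
        Filter.atTop (𝓝 0) := by
      rw [← ENNReal.tendsto_toReal_iff (fun n => measure_ne_top P _) (by simp)]
      simpa using hreal
    have hInter : P (⋂ n : ℕ, {ω | Y' ω ∈ Set.Ioc (θ - 1/(n+1)) θ}) = 0 :=
      tendsto_nhds_unique htendsto hlim0
    refine measure_mono_null ?_ hInter
    intro ω hω
    simp only [Set.mem_setOf_eq] at hω
    simp only [Set.mem_iInter, Set.mem_setOf_eq, Set.mem_Ioc, hω]
    intro n
    constructor
    · have : (0:ℝ) < 1/(n+1) := by positivity
      linarith
    · exact le_refl θ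
  -- rewrite J in terms of Y' and the smooth decomposition of pinball
  have hJ' : J = fun x => ∫ ω, (τ * (Y' ω - x) + max (x - Y' ω) 0) ∂P := by
    funext x
    rw [hJ x]
    refine integral_congr_ae ?_
    filter_upwards [hYY'] with ω hω
    rw [pinball_eq, hω, neg_sub]
  have hae : ∀ᵐ ω ∂P, Y' ω ≠ θ := by
    rw [ae_iff]
    simpa using hnull
  have hlip : ∀ᵐ ω ∂P, LipschitzOnWith (Real.nnabs ((fun _ : Ω => (2:ℝ)) ω))
      (fun x => τ * (Y' ω - x) + max (x - Y' ω) 0) (Metric.ball θ 1) := by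
    refine Filter.Eventually.of_forall fun ω => ?_
    refine LipschitzWith.lipschitzOnWith ?_
    refine LipschitzWith.of_dist_le_mul fun x y => ?_
    have hc : ((Real.nnabs (2:ℝ) : NNReal) : ℝ) = 2 := by
      simp [Real.coe_nnabs]
    rw [hc, Real.dist_eq, Real.dist_eq]
    have h1 : |max (x - Y' ω) 0 - max (y - Y' ω) 0| ≤ |(x - Y' ω) - (y - Y' ω)| :=
      abs_max_sub_max_le_abs _ _ _
    have h2 : |τ * (Y' ω - x) - τ * (Y' ω - y)| = τ * |y - x| := by
      rw [← mul_sub, abs_mul, abs_of_pos hτ0]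
      congr 1
      congr 1
      ring
    have h3 : |y - x| = |x - y| := abs_sub_comm y x
    calc |(τ * (Y' ω - x) + max (x - Y' ω) 0) - (τ * (Y' ω - y) + max (y - Y' ω) 0)|
        ≤ |τ * (Y' ω - x) - τ * (Y' ω - y)| + |max (x - Y' ω) 0 - max (y - Y' ω) 0| := by
          have := abs_add_le (τ * (Y' ω - x) - τ * (Y' ω - y))
            (max (x - Y' ω) 0 - max (y - Y' ω) 0)
          calc |(τ * (Y' ω - x) + max (x - Y' ω) 0) - (τ * (Y' ω - y) + max (y - Y' ω) 0)|
              = |(τ * (Y' ω - x) - τ * (Y' ω - y)) + (max (x - Y' ω) 0 - max (y - Y' ω) 0)| := by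
                ring_nf
            _ ≤ _ := this
      _ ≤ τ * |x - y| + |x - y| := by
          rw [h2, h3]
          have h4 : |x - Y' ω - (y - Y' ω)| = |x - y| := by ring_nf
          rw [h4] at h1
          linarith
      _ ≤ 2 * |x - y| := by nlinarith [abs_nonneg (x - y)]
  have hdiff : ∀ᵐ ω ∂P, HasDerivAt (fun x => τ * (Y' ω - x) + max (x - Y' ω) 0)
      ((if Y' ω < θ then (1:ℝ) else 0) - τ) θ := by
    filter_upwards [hae] with ω hω
    rcases lt_or_gt_of_ne hω with hlt | hgt
    · -- Y' ω < θ : locally max (x - Y'ω) 0 = x - Y'ω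
      have hg : HasDerivAt (fun x => τ * (Y' ω - x) + (x - Y' ω)) (τ * (-1) + 1) θ := by
        have ha : HasDerivAt (fun x : ℝ => Y' ω - x) (-1) θ := by
          simpa using (hasDerivAt_id' θ).const_sub (Y' ω)
        exact (ha.const_mul τ).add ((hasDerivAt_id θ).sub_const (Y' ω))
      have hev : (fun x => τ * (Y' ω - x) + max (x - Y' ω) 0)
          =ᶠ[𝓝 θ] (fun x => τ * (Y' ω - x) + (x - Y' ω)) := by
        filter_upwards [eventually_gt_nhds hlt] with x hx
        rw [max_eq_left (by linarith : (0:ℝ) ≤ x - Y' ω)]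
      have := hg.congr_of_eventuallyEq hev
      convert this using 1
      · rfl
      · rfl
      rw [if_pos hlt]
      ring
    · -- Y' ω > θ : locally max (x - Y'ω) 0 = 0
      have hg : HasDerivAt (fun x => τ * (Y' ω - x) + 0) (τ * (-1) + 0) θ := by
        have ha : HasDerivAt (fun x : ℝ => Y' ω - x) (-1) θ := by
          simpa using (hasDerivAt_id' θ).const_sub (Y' ω)
        exact (ha.const_mul τ).add (hasDerivAt_const θ 0)
      have hev : (fun x => τ * (Y' ω - x) + max (x - Y' ω) 0)
          =ᶠ[𝓝 θ] (fun x => τ * (Y' ω - x) + 0) := by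
        filter_upwards [eventually_lt_nhds hgt] with x hx
        rw [max_eq_right (by linarith : x - Y' ω ≤ (0:ℝ))]
      have := hg.congr_of_eventuallyEq hev
      convert this using 1
      · rfl
      · rfl
      have : ¬ (Y' ω < θ) := not_lt.mpr (le_of_lt hgt)
      rw [if_neg this]
      ring
  have hmeas : ∀ᶠ x in 𝓝 θ, AEStronglyMeasurable
      (fun ω => τ * (Y' ω - x) + max (x - Y' ω) 0) P := by
    refine Filter.Eventually.of_forall fun x => ?_
    exact ((measurable_const.mul (hY'meas.sub measurable_const)).add
      ((measurable_const.sub hY'meas).max measurable_const)).aestronglyMeasurable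
  have hint : Integrable (fun ω => τ * (Y' ω - θ) + max (θ - Y' ω) 0) P := by
    refine Integrable.add ?_ ?_
    · exact (hY'int.sub (integrable_const θ)).const_mul τ
    · exact ((integrable_const θ).sub hY'int).pos_part
  have hF'meas : AEStronglyMeasurable
      (fun ω => (if Y' ω < θ then (1:ℝ) else 0) - τ) P := by
    refine Measurable.aestronglyMeasurable ?_
    exact (Measurable.ite (measurableSet_lt hY'meas measurable_const)
      measurable_const measurable_const).sub measurable_const
  have key := hasDerivAt_integral_of_dominated_loc_of_lip (μ := P)
    (F := fun x ω => τ * (Y' ω - x) + max (x - Y' ω) 0)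
    (F' := fun ω => (if Y' ω < θ then (1:ℝ) else 0) - τ)
    (x₀ := θ) (bound := fun _ => (2:ℝ)) (Metric.ball_mem_nhds θ one_pos) hmeas hint hF'meas hlip
    (integrable_const 2) hdiff
  have hderiv := key.2
  -- compute the integral of the derivative
  have hsetlt : MeasurableSet {ω | Y' ω < θ} := measurableSet_lt hY'meas measurable_const
  have hind : Integrable (fun ω => if Y' ω < θ then (1:ℝ) else 0) P := by
    have : (fun ω => if Y' ω < θ then (1:ℝ) else 0)
        = Set.indicator {ω | Y' ω < θ} (fun _ => (1:ℝ)) := by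
      funext ω; simp [Set.indicator_apply, Set.mem_setOf_eq]
    rw [this]
    exact (integrable_const (1:ℝ)).indicator hsetlt
  have hPlt : (P {ω | Y' ω < θ}).toReal = F θ := by
    rw [hFeq θ]
    congr 1
    refine le_antisymm (measure_mono fun ω h => show Y' ω ≤ θ from le_of_lt h) ?_
    calc P {ω | Y' ω ≤ θ} ≤ P ({ω | Y' ω < θ} ∪ {ω | Y' ω = θ}) := by
          refine measure_mono fun ω h => ?_
          rcases lt_or_eq_of_le (show Y' ω ≤ θ from h) with h' | h'
          · exact Or.inl h'
          · exact Or.inr h'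
      _ ≤ P {ω | Y' ω < θ} + P {ω | Y' ω = θ} := measure_union_le _ _
      _ = P {ω | Y' ω < θ} := by rw [hnull, add_zero]
  have hintval : ∫ ω, ((if Y' ω < θ then (1:ℝ) else 0) - τ) ∂P = F θ - τ := by
    rw [integral_sub hind (integrable_const τ), integral_const]
    have : ∫ ω, (if Y' ω < θ then (1:ℝ) else 0) ∂P = (P {ω | Y' ω < θ}).toReal := by
      have h : (fun ω => if Y' ω < θ then (1:ℝ) else 0)
          = Set.indicator {ω | Y' ω < θ} (fun _ => (1:ℝ)) := by
        funext ω; simp [Set.indicator_apply, Set.mem_setOf_eq]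
      rw [h, integral_indicator_const _ hsetlt]
      simp [Measure.real]
    rw [this, hPlt]
    simp
  rw [hJ']
  rw [← hintval]
  exact hderiv
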